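/- (Hejduk) Let (X, S) be a category base and let M(S) be the σ-ideal of all meager sets of (X, S). Assume: (1) for every cardinal α < card(X), the family M(S) is α-additive, i.e., closed under unions of any α-indexed sequence of its members; (2) there exists a base P of M(S) (a subfamily P ⊆ M(S) such that every member of M(S) is contained in some member of P) of cardinality not greater than that of X. If X ∉ M(S), then for every family {X_t}_{t∈T} of meager sets forming a partition of X, there exists a set T′ ⊆ T such that ⋃_{t∈T′} X_t is not a Baire set. -/

import Mathlib

universe u

/-- `(Y, C)` is a category base: `Y` is nonempty, the regions of `C` cover `Y`, and
Morgan's second axiom holds: for every region `A` and every nonempty family `D` of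
pairwise disjoint regions with `card D < card C`, (i) if `A ∩ ⋃₀ D` contains a region
then `A ∩ F` contains a region for some `F ∈ D`, and (ii) if `A ∩ ⋃₀ D` contains no
region then some region `B ⊆ A` is disjoint from every member of `D`. -/
structure IsCategoryBase {X : Type u} (Y : Set X) (C : Set (Set X)) : Prop where
  carrier_nonempty : Y.Nonempty
  cover : ⋃₀ C = Y
  meet : ∀ A ∈ C, ∀ D : Set (Set X), D ⊆ C → D.Nonempty → D.Pairwise Disjoint →
    Cardinal.mk D < Cardinal.mk C →
    (∃ E ∈ C, E ⊆ A ∩ ⋃₀ D) → ∃ F ∈ D, ∃ E ∈ C, E ⊆ A ∩ F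
  avoid : ∀ A ∈ C, ∀ D : Set (Set X), D ⊆ C → D.Nonempty → D.Pairwise Disjoint →
    Cardinal.mk D < Cardinal.mk C →
    ¬ (∃ E ∈ C, E ⊆ A ∩ ⋃₀ D) → ∃ B ∈ C, B ⊆ A ∧ ∀ F ∈ D, Disjoint B F

/-- A set `S` is singular w.r.t. the family of regions `C` if every region contains a
subregion disjoint from `S`. -/
def Singular {X : Type u} (C : Set (Set X)) (S : Set X) : Prop :=
  ∀ A ∈ C, ∃ B ∈ C, B ⊆ A ∧ Disjoint B S

/-- A set is meager if it is a countable union of singular sets. -/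
def MeagerIn {X : Type u} (C : Set (Set X)) (S : Set X) : Prop :=
  ∃ f : ℕ → Set X, (∀ n, Singular C (f n)) ∧ S = ⋃ n, f n

/-- A set is abundant if it is not meager. -/
def Abundant {X : Type u} (C : Set (Set X)) (S : Set X) : Prop :=
  ¬ MeagerIn C S

/-- A set `S` is a Baire set in the category base `(Y, C)` if every region contains a
subregion in which either `S` or its complement `Y \ S` is meager. -/
def BaireSet {X : Type u} (Y : Set X) (C : Set (Set X)) (S : Set X) : Prop :=
  ∀ A ∈ C, ∃ B ∈ C, B ⊆ A ∧ (MeagerIn C (S ∩ B) ∨ MeagerIn C ((Y \ S) ∩ B))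

/-- A Baire base is a category base all of whose regions are abundant. -/
def IsBaireBase {X : Type u} (C : Set (Set X)) : Prop :=
  ∀ A ∈ C, Abundant C A

/-- `C'` is a π-base for `C` if `C' ⊆ C` and every region of `C` contains a region of `C'`. -/
def IsPiBase {X : Type u} (C C' : Set (Set X)) : Prop :=
  C' ⊆ C ∧ ∀ A ∈ C, ∃ B ∈ C', B ⊆ A

/-- `C` is `χ`-saturated: every subfamily of `C` of cardinality `χ` contains two distinct
members with nonempty intersection. -/
def Saturated {X : Type u} (C : Set (Set X)) (χ : Cardinal.{u}) : Prop :=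
  ∀ E ⊆ C, Cardinal.mk E = χ → ∃ A ∈ E, ∃ B ∈ E, A ≠ B ∧ (A ∩ B).Nonempty

/-- The family `K = {X − F : F ∈ C'}` of complements of members of `C'`. -/
def KFam {X : Type u} (C' : Set (Set X)) : Set (Set X) :=
  compl '' C'

/-- `⋂_{<#(X)} K` : all sets representable as the intersection of a nonempty subfamily of
`KFam C'` of cardinality less than `#(X)`. -/
def InterFam {X : Type u} (C' : Set (Set X)) : Set (Set X) :=
  {S | ∃ E ⊆ KFam C', E.Nonempty ∧ Cardinal.mk E < Cardinal.mk X ∧ S = ⋂₀ E}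

/-- `⋃_σ ⋂_{<#(X)} K` : all sets representable as a countable union of sets from
`InterFam C'`. -/
def SigmaInterFam {X : Type u} (C' : Set (Set X)) : Set (Set X) :=
  {S | ∃ f : ℕ → Set X, (∀ n, f n ∈ InterFam C') ∧ S = ⋃ n, f n}

/-- `A` is completely non-Baire in the region `D` (w.r.t. the category base `(Y, C)`):
for every Baire set `B` with `B ∩ D` abundant, both `A ∩ B` and `(D \ A) ∩ B` are
abundant. -/
def CompletelyNonBaireIn {X : Type u} (Y : Set X) (C : Set (Set X)) (A D : Set X) : Prop :=
  ∀ B : Set X, BaireSet Y C B → Abundant C (B ∩ D) →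
    Abundant C (A ∩ B) ∧ Abundant C ((D \ A) ∩ B)

/-- `A` is completely non-Baire if it is completely non-Baire in every region. -/
def CompletelyNonBaire {X : Type u} (Y : Set X) (C : Set (Set X)) (A : Set X) : Prop :=
  ∀ D ∈ C, CompletelyNonBaireIn Y C A D

namespace HejdukAux

variable {X : Type u} {S : Set (Set X)}

theorem singular_mono {A B : Set X} (h : Singular S A) (hBA : B ⊆ A) : Singular S B := by
  intro R hR
  obtain ⟨B', hB', h1, h2⟩ := h R hR
  exact ⟨B', hB', h1, h2.mono_right hBA⟩

theorem singular_empty : Singular S (∅ : Set X) := by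
  intro R hR
  exact ⟨R, hR, subset_rfl, disjoint_bot_right⟩

theorem meager_of_subset_iUnion {M : Set X} (f : ℕ → Set X)
    (hf : ∀ n, Singular S (f n)) (h : M ⊆ ⋃ n, f n) : MeagerIn S M := by
  refine ⟨fun n => f n ∩ M, fun n => singular_mono (hf n) Set.inter_subset_left, ?_⟩
  ext x
  simp only [Set.mem_iUnion, Set.mem_inter_iff]
  constructor
  · intro hx
    obtain ⟨n, hn⟩ := Set.mem_iUnion.mp (h hx)
    exact ⟨n, hn, hx⟩
  · rintro ⟨n, _, hx⟩; exact hx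

theorem meager_mono {M N : Set X} (h : MeagerIn S M) (hNM : N ⊆ M) : MeagerIn S N := by
  obtain ⟨f, hf, rfl⟩ := h
  exact meager_of_subset_iUnion f hf hNM

theorem meager_empty : MeagerIn S (∅ : Set X) :=
  ⟨fun _ => ∅, fun _ => singular_empty, by simp⟩

theorem meager_iUnion {g : ℕ → Set X} (h : ∀ n, MeagerIn S (g n)) :
    MeagerIn S (⋃ n, g n) := by
  choose f hf hg using h
  refine meager_of_subset_iUnion (fun k => f (Nat.unpair k).1 (Nat.unpair k).2)
    (fun k => hf _ _) ?_
  intro x hx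
  obtain ⟨n, hn⟩ := Set.mem_iUnion.mp hx
  rw [hg n] at hn
  obtain ⟨m, hm⟩ := Set.mem_iUnion.mp hn
  exact Set.mem_iUnion.mpr ⟨Nat.pair n m, by simpa [Nat.unpair_pair] using hm⟩

theorem meager_union {M N : Set X} (hM : MeagerIn S M) (hN : MeagerIn S N) :
    MeagerIn S (M ∪ N) := by
  have h : ∀ n : ℕ, MeagerIn S (if n = 0 then M else N) := by
    intro n; by_cases hn : n = 0 <;> simp [hn, hM, hN]
  have := meager_iUnion h
  refine meager_mono this ?_
  intro x hx
  rcases hx with hx | hx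
  · exact Set.mem_iUnion.mpr ⟨0, by simpa using hx⟩
  · exact Set.mem_iUnion.mpr ⟨1, by simpa using hx⟩


/-- The strong-density decomposition lemma. -/
theorem SD (hCB : IsCategoryBase (Set.univ : Set X) S) (hne : ∅ ∉ S)
    (W : Set X) (R : Set (Set X)) (hRS : R ⊆ S)
    (hRW : ∀ B ∈ R, B ⊆ W)
    (hd1 : ∀ A ∈ S, A ⊆ W → ∃ B ∈ R, B ⊆ A)
    (hd2 : ∀ A ∈ S, ¬(∃ E ∈ S, E ⊆ A ∩ W) → ∃ B ∈ S, B ⊆ A ∧ Disjoint B W)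
    (G : Set X) (hG : ∀ B ∈ R, MeagerIn S (G ∩ B)) :
    MeagerIn S (G ∩ W) := by
  classical
  set μ : Cardinal.{u} := Cardinal.mk S with hμ
  obtain ⟨e⟩ : Nonempty (μ.ord.ToType ≃ S) := Cardinal.eq.mp (Cardinal.mk_ord_toType μ)
  set WC := μ.ord.ToType
  -- the family of previously chosen nonempty values
  let pset : ∀ x : WC, (∀ y : WC, y < x → Set X) → Set (Set X) :=
    fun x prev => {B | B ≠ ∅ ∧ ∃ y : WC, ∃ h : y < x, prev y h = B}
  have hpset_lt : ∀ (x : WC) (prev : ∀ y : WC, y < x → Set X), Cardinal.mk (pset x prev) < μ := by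
    intro x prev
    have hsub : pset x prev ⊆ Set.range (fun y : Set.Iio x => prev y.1 y.2) := by
      rintro B ⟨-, y, h, rfl⟩
      exact ⟨⟨y, h⟩, rfl⟩
    exact lt_of_le_of_lt
      ((Cardinal.mk_le_mk_of_subset hsub).trans Cardinal.mk_range_le)
      (Cardinal.mk_Iio_ord_toType x)
  -- the guard predicate
  let Xi : ∀ x : WC, (∀ y : WC, y < x → Set X) → Prop :=
    fun x prev =>
      (∀ y (h : y < x), prev y h = ∅ ∨ prev y h ∈ R) ∧
      (∀ y y' (h : y < x) (h' : y' < x), y ≠ y' → Disjoint (prev y h) (prev y' h')) ∧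
      (∃ E ∈ S, E ⊆ (e x : Set X) ∩ W) ∧
      ¬ ∃ E ∈ S, E ⊆ (e x : Set X) ∩ ⋃₀ (pset x prev)
  -- the choice of a new region at a guarded stage
  have key : ∀ (x : WC) (prev : ∀ y : WC, y < x → Set X), Xi x prev →
      ∃ B, B ∈ R ∧ B ⊆ (e x : Set X) ∩ W ∧ ∀ y (h : y < x), Disjoint B (prev y h) := by
    intro x prev hXi
    obtain ⟨hR1, hpair, ⟨E₀, hE₀S, hE₀⟩, hno⟩ := hXi
    have hpsetS : pset x prev ⊆ S := by
      rintro B ⟨hBne, y, h, rfl⟩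
      rcases hR1 y h with h' | h'
      · exact absurd h' hBne
      · exact hRS h'
    have hpsetPair : (pset x prev).Pairwise Disjoint := by
      rintro B ⟨hBne, y, h, rfl⟩ B' ⟨hB'ne, y', h', rfl⟩ hBB'
      have hyy' : y ≠ y' := by rintro rfl; exact hBB' rfl
      exact hpair y y' h h' hyy'
    by_cases hps : (pset x prev).Nonempty
    · obtain ⟨B', hB'S, hB'sub, hB'disj⟩ :=
        hCB.avoid E₀ hE₀S (pset x prev) hpsetS hps hpsetPair (hpset_lt x prev) (by
          rintro ⟨E, hES, hE⟩
          exact hno ⟨E, hES, fun z hz => ⟨(hE₀ (hE hz).1).1, (hE hz).2⟩⟩)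
      obtain ⟨B, hBR, hBsub⟩ := hd1 B' hB'S (fun z hz => (hE₀ (hB'sub hz)).2)
      refine ⟨B, hBR, fun z hz => hE₀ (hB'sub (hBsub hz)), ?_⟩
      intro y h
      rcases eq_or_ne (prev y h) ∅ with hy | hy
      · rw [hy]; exact disjoint_bot_right
      · exact (hB'disj _ ⟨hy, y, h, rfl⟩).mono_left hBsub
    · obtain ⟨B, hBR, hBsub⟩ := hd1 E₀ hE₀S (fun z hz => (hE₀ hz).2)
      refine ⟨B, hBR, fun z hz => hE₀ (hBsub hz), ?_⟩
      intro y h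
      rcases eq_or_ne (prev y h) ∅ with hy | hy
      · rw [hy]; exact disjoint_bot_right
      · exact absurd (⟨prev y h, hy, y, h, rfl⟩ : (pset x prev).Nonempty) hps
  -- the transfinite construction
  let F : WC → Set X := IsWellFounded.fix (fun (a b : WC) => a < b)
    (fun x prev => if h : Xi x prev then (key x prev h).choose else ∅)
  have hF : ∀ x : WC, F x =
      if h : Xi x (fun y _ => F y) then (key x (fun y _ => F y) h).choose else ∅ :=
    fun x => IsWellFounded.fix_eq _ _ x
  have INV : ∀ x : WC, (F x = ∅ ∨ (F x ∈ R ∧ F x ⊆ (e x : Set X) ∩ W)) ∧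
      ∀ y, y < x → Disjoint (F y) (F x) := by
    intro x
    rw [hF x]
    by_cases h : Xi x (fun y _ => F y)
    · rw [dif_pos h]
      obtain ⟨h1, h2, h3⟩ := (key x _ h).choose_spec
      exact ⟨Or.inr ⟨h1, h2⟩, fun y hy => (h3 y hy).symm⟩
    · rw [dif_neg h]
      exact ⟨Or.inl rfl, fun y hy => disjoint_bot_right⟩
  set D : Set (Set X) := {B | B ≠ ∅ ∧ ∃ x : WC, F x = B} with hD
  have hDR : D ⊆ R := by
    rintro B ⟨hne', x, rfl⟩
    rcases (INV x).1 with h | h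
    · exact absurd h hne'
    · exact h.1
  have hDpair : D.Pairwise Disjoint := by
    rintro B ⟨hB, x, rfl⟩ B' ⟨hB', x', rfl⟩ hne'
    rcases lt_trichotomy x x' with h | h | h
    · exact (INV x').2 x h
    · exact absurd (by rw [h]) hne'
    · exact ((INV x).2 x' h).symm
  have hDW : ∀ B ∈ D, B ⊆ W := fun B hB => hRW B (hDR hB)
  -- strong density
  have DEN : ∀ A ∈ S, (∃ E ∈ S, E ⊆ A ∩ W) → ∃ B ∈ D, ∃ E ∈ S, E ⊆ A ∩ B := by
    intro A hA hok
    set x := e.symm ⟨A, hA⟩ with hxdef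
    have hex : (e x : Set X) = A := by rw [hxdef, Equiv.apply_symm_apply]
    by_cases h : Xi x (fun y _ => F y)
    · have hFx : F x = (key x (fun y _ => F y) h).choose := by rw [hF x, dif_pos h]
      obtain ⟨h1, h2, _⟩ := (key x _ h).choose_spec
      rw [← hFx] at h1 h2
      have hFxne : F x ≠ ∅ := by
        intro hc
        exact hne (hc ▸ hRS h1)
      refine ⟨F x, ⟨hFxne, x, rfl⟩, F x, hRS h1, ?_⟩
      intro z hz
      exact ⟨hex ▸ (h2 hz).1, hz⟩
    · have c1 : ∀ y (h' : y < x), F y = ∅ ∨ F y ∈ R := fun y _ =>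
        (INV y).1.elim Or.inl (fun h' => Or.inr h'.1)
      have c2 : ∀ y y' (h' : y < x) (h'' : y' < x), y ≠ y' →
          Disjoint (F y) (F y') := by
        intro y y' _ _ hyy'
        rcases lt_trichotomy y y' with h' | h' | h'
        · exact (INV y').2 y h'
        · exact absurd h' hyy'
        · exact ((INV y).2 y' h').symm
      have c3 : ∃ E ∈ S, E ⊆ (e x : Set X) ∩ W := by rw [hex]; exact hok
      have h4 : ∃ E ∈ S, E ⊆ (e x : Set X) ∩ ⋃₀ (pset x (fun y _ => F y)) := by
        by_contra h4
        exact h ⟨c1, c2, c3, h4⟩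
      have hsubD : pset x (fun y _ => F y) ⊆ D := by
        rintro B ⟨hBne, y, hy, rfl⟩
        exact ⟨hBne, y, rfl⟩
      obtain ⟨E, hES, hE⟩ := h4
      have hpsne : (pset x (fun y _ => F y)).Nonempty := by
        have hEne : E.Nonempty := Set.nonempty_iff_ne_empty.mpr (fun hc => hne (hc ▸ hES))
        obtain ⟨z, hz⟩ := hEne
        obtain ⟨B, hB, -⟩ := (hE hz).2
        exact ⟨B, hB⟩
      obtain ⟨F', hF'mem, E', hE'S, hE'⟩ :=
        hCB.meet (e x) (e x).2 (pset x (fun y _ => F y))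
          (fun B hB => hRS (hDR (hsubD hB))) hpsne
          (hDpair.mono hsubD) (hpset_lt x _) ⟨E, hES, hE⟩
      exact ⟨F', hsubD hF'mem, E', hE'S, fun z hz => ⟨hex ▸ (hE' hz).1, (hE' hz).2⟩⟩
  -- decompositions of G ∩ B for B ∈ D
  have hGD : ∀ B : D, MeagerIn S (G ∩ (B : Set X)) := fun B => hG B (hDR B.2)
  choose fs hfs hfseq using hGD
  set G' : ℕ → Set X := fun n => ⋃ B : D, (fs B n ∩ (B : Set X)) with hG'
  have hG'sing : ∀ n, Singular S (G' n) := by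
    intro n A hA
    by_cases hok : ∃ E ∈ S, E ⊆ A ∩ W
    · obtain ⟨B₀, hB₀D, E, hES, hE⟩ := DEN A hA hok
      obtain ⟨B, hBS, hBsub, hBdisj⟩ := hfs ⟨B₀, hB₀D⟩ n E hES
      refine ⟨B, hBS, fun z hz => (hE (hBsub hz)).1, ?_⟩
      rw [hG', Set.disjoint_iUnion_right]
      intro B'
      by_cases hBB' : (B' : Set X) = B₀
      · have : B' = ⟨B₀, hB₀D⟩ := Subtype.ext hBB'
        rw [this]
        exact hBdisj.mono_right Set.inter_subset_left
      · have hd : Disjoint B₀ (B' : Set X) :=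
          hDpair hB₀D B'.2 (fun hc => hBB' hc.symm)
        exact (hd.mono_left (fun z hz => (hE (hBsub hz)).2)).mono_right
          Set.inter_subset_right
    · obtain ⟨B, hBS, hBsub, hBdisj⟩ := hd2 A hA hok
      refine ⟨B, hBS, hBsub, hBdisj.mono_right ?_⟩
      rw [hG']
      refine Set.iUnion_subset (fun B' => ?_)
      exact Set.inter_subset_right.trans (hDW B' B'.2)
  set Z : Set X := (G ∩ W) \ ⋃ B : D, (B : Set X) with hZ
  have hZsing : Singular S Z := by
    intro A hA
    by_cases hok : ∃ E ∈ S, E ⊆ A ∩ W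
    · obtain ⟨B₀, hB₀D, E, hES, hE⟩ := DEN A hA hok
      refine ⟨E, hES, fun z hz => (hE hz).1, ?_⟩
      rw [Set.disjoint_left]
      intro z hz hzZ
      rw [hZ] at hzZ
      exact hzZ.2 (Set.mem_iUnion.mpr ⟨⟨B₀, hB₀D⟩, (hE hz).2⟩)
    · obtain ⟨B, hBS, hBsub, hBdisj⟩ := hd2 A hA hok
      refine ⟨B, hBS, hBsub, hBdisj.mono_right ?_⟩
      rw [hZ]
      exact Set.diff_subset.trans Set.inter_subset_right
  refine meager_of_subset_iUnion (fun k => Nat.casesOn k Z G') (fun k => ?_) ?_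
  · cases k with
    | zero => exact hZsing
    | succ n => exact hG'sing n
  · intro z hz
    by_cases hzD : z ∈ ⋃ B : D, (B : Set X)
    · obtain ⟨B₀, hB₀⟩ := Set.mem_iUnion.mp hzD
      have hzGB : z ∈ G ∩ (B₀ : Set X) := ⟨hz.1, hB₀⟩
      rw [hfseq B₀] at hzGB
      obtain ⟨n, hn⟩ := Set.mem_iUnion.mp hzGB
      refine Set.mem_iUnion.mpr ⟨n + 1, ?_⟩
      exact Set.mem_iUnion.mpr ⟨B₀, ⟨hn, hB₀⟩⟩
    · exact Set.mem_iUnion.mpr ⟨0, ⟨hz, hzD⟩⟩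


open Cardinal

variable (c : Cardinal.{u})



/-- bounded sets from smallness, given regularity -/
theorem bdd_small
    (reg : ∀ (ι : Type u) (f : ι → (Cardinal.ord c).ToType), #ι < c → ∃ b : (Cardinal.ord c).ToType, ∀ i, f i ≤ b)
    (s : Set (Cardinal.ord c).ToType) (hs : #s < c) : ∃ b : (Cardinal.ord c).ToType, ∀ z ∈ s, z ≤ b := by
  obtain ⟨b, hb⟩ := reg s (fun z => z.1) hs
  exact ⟨b, fun z hz => hb ⟨z, hz⟩⟩

theorem mk_Iic_lt (hc : ℵ₀ ≤ c) (b : (Cardinal.ord c).ToType) : #(Set.Iic b) < c := by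
  have h1 : (Set.Iic b : Set (Cardinal.ord c).ToType) ⊆ Set.Iio b ∪ {b} := by
    intro z hz
    rcases lt_or_eq_of_le (Set.mem_Iic.mp hz) with h | h
    · exact Or.inl h
    · exact Or.inr (by simp [h])
  calc #(Set.Iic b) ≤ #((Set.Iio b ∪ {b} : Set (Cardinal.ord c).ToType)) := Cardinal.mk_le_mk_of_subset h1
    _ ≤ #(Set.Iio b) + #({b} : Set (Cardinal.ord c).ToType) := Cardinal.mk_union_le _ _
    _ < c := by
        rw [Cardinal.mk_singleton]
        exact Cardinal.add_lt_of_lt hc (Cardinal.mk_Iio_ord_toType b)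
          (lt_of_lt_of_le Cardinal.one_lt_aleph0 hc)

theorem unb_of_mk_eq (hc : ℵ₀ ≤ c) (s : Set (Cardinal.ord c).ToType) (hs : #s = c) :
    ∀ b : (Cardinal.ord c).ToType, ∃ z ∈ s, b < z := by
  intro b
  by_contra hcon
  push_neg at hcon
  have hsub : s ⊆ Set.Iic b := fun z hz => Set.mem_Iic.mpr (hcon z hz)
  have := (Cardinal.mk_le_mk_of_subset hsub).trans_lt (mk_Iic_lt c hc b)
  rw [hs] at this
  exact lt_irrefl _ this

/-- Diagonal extension of an injectively listed a.d. family. -/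
theorem adExtend (hc : ℵ₀ ≤ c)
    (reg : ∀ (ι : Type u) (f : ι → (Cardinal.ord c).ToType), #ι < c → ∃ b : (Cardinal.ord c).ToType, ∀ i, f i ≤ b)
    (Sstar : Set (Cardinal.ord c).ToType) (C : (Cardinal.ord c).ToType → Set (Cardinal.ord c).ToType)
    (hCS : ∀ i, C i ⊆ Sstar)
    (hCunb : ∀ i, ∀ b : (Cardinal.ord c).ToType, ∃ z ∈ C i, b < z)
    (hCbdd : ∀ i j, i ≠ j → ∃ b : (Cardinal.ord c).ToType, ∀ z ∈ C i ∩ C j, z ≤ b) :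
    ∃ Astar : Set (Cardinal.ord c).ToType, Astar ⊆ Sstar ∧ (∀ b : (Cardinal.ord c).ToType, ∃ z ∈ Astar, b < z) ∧
      ∀ i, ∃ b : (Cardinal.ord c).ToType, ∀ z ∈ Astar ∩ C i, z ≤ b := by
  classical
  have key : ∀ (x : (Cardinal.ord c).ToType) (prev : ∀ y : (Cardinal.ord c).ToType, y < x → (Cardinal.ord c).ToType),
      ∃ z : (Cardinal.ord c).ToType, z ∈ C x ∧ (∀ y (h : y < x), prev y h < z) ∧ ∀ i, i < x → z ∉ C i := by
    intro x prev
    obtain ⟨b1, hb1⟩ := reg (Set.Iio x) (fun y => prev y.1 y.2) (Cardinal.mk_Iio_ord_toType x)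
    have hbd : ∀ i : Set.Iio x, ∃ b : (Cardinal.ord c).ToType, ∀ z ∈ C i.1 ∩ C x, z ≤ b :=
      fun i => hCbdd i.1 x (ne_of_lt i.2)
    choose bd hbdspec using hbd
    obtain ⟨b2, hb2⟩ := reg (Set.Iio x) bd (Cardinal.mk_Iio_ord_toType x)
    obtain ⟨z, hzC, hzb⟩ := hCunb x (max b1 b2)
    refine ⟨z, hzC, ?_, ?_⟩
    · intro y h
      exact lt_of_le_of_lt ((hb1 ⟨y, h⟩).trans (le_max_left _ _)) hzb
    · intro i hi hziC
      have : z ≤ bd ⟨i, hi⟩ := hbdspec ⟨i, hi⟩ z ⟨hziC, hzC⟩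
      exact absurd (this.trans ((hb2 ⟨i, hi⟩).trans (le_max_right _ _))) (not_le.mpr hzb)
  let a : (Cardinal.ord c).ToType → (Cardinal.ord c).ToType := IsWellFounded.fix (fun (x y : (Cardinal.ord c).ToType) => x < y)
    (fun x prev => (key x prev).choose)
  have ha : ∀ x : (Cardinal.ord c).ToType, a x ∈ C x ∧ (∀ y, y < x → a y < a x) ∧ ∀ i, i < x → a x ∉ C i := by
    intro x
    have hfix : a x = (key x (fun y _ => a y)).choose :=
      IsWellFounded.fix_eq _ _ x
    obtain ⟨h1, h2, h3⟩ := (key x (fun y _ => a y)).choose_spec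
    rw [← hfix] at h1 h2 h3
    exact ⟨h1, h2, h3⟩
  have hainj : Function.Injective a := by
    intro y x h
    by_contra hne
    rcases lt_or_gt_of_ne hne with h' | h'
    · exact absurd h (ne_of_lt ((ha x).2.1 y h'))
    · exact absurd h.symm (ne_of_lt ((ha y).2.1 x h'))
  refine ⟨Set.range a, ?_, ?_, ?_⟩
  · rintro z ⟨x, rfl⟩
    exact hCS x ((ha x).1)
  · refine unb_of_mk_eq c hc _ ?_
    rw [Cardinal.mk_range_eq a hainj, Cardinal.mk_ord_toType]
  · intro i
    obtain ⟨b, hb⟩ := reg (Set.Iic i) (fun x => a x.1) (mk_Iic_lt c hc i)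
    refine ⟨b, ?_⟩
    rintro z ⟨⟨x, rfl⟩, hzC⟩
    have hxi : x ≤ i := by
      by_contra hgt
      exact (ha x).2.2 i (not_le.mp hgt) hzC
    exact hb ⟨x, hxi⟩

/-- A family of `succ c` many unbounded subsets of `Sstar` with pairwise bounded
intersections. -/
theorem adFamily (hc : ℵ₀ ≤ c)
    (reg : ∀ (ι : Type u) (f : ι → (Cardinal.ord c).ToType), #ι < c → ∃ b : (Cardinal.ord c).ToType, ∀ i, f i ≤ b)
    (Sstar : Set (Cardinal.ord c).ToType) (hSunb : ∀ b : (Cardinal.ord c).ToType, ∃ z ∈ Sstar, b < z) :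
    ∃ A : (Order.succ c).ord.ToType → Set (Cardinal.ord c).ToType,
      (∀ γ, A γ ⊆ Sstar) ∧
      (∀ γ (b : (Cardinal.ord c).ToType), ∃ z ∈ A γ, b < z) ∧
      (∀ γ δ, γ ≠ δ → ∃ b : (Cardinal.ord c).ToType, ∀ z ∈ A γ ∩ A δ, z ≤ b) := by
  classical
  haveI hWKne : Nonempty (Cardinal.ord c).ToType := by
    rw [Ordinal.toType_nonempty_iff_ne_zero]
    intro h0
    have hc0 : c = 0 := by
      have h1 := Cardinal.card_ord c
      rw [h0, Ordinal.card_zero] at h1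
      exact h1.symm
    rw [hc0] at hc
    exact (Cardinal.aleph0_pos).not_ge hc
  -- cardinality of Sstar
  have hSc : #Sstar = c := by
    refine le_antisymm ((Cardinal.mk_set_le _).trans_eq (Cardinal.mk_ord_toType c)) ?_
    by_contra hlt
    push_neg at hlt
    obtain ⟨b, hb⟩ := bdd_small c reg Sstar hlt
    obtain ⟨z, hz, hbz⟩ := hSunb b
    exact absurd (hb z hz) (not_le.mpr hbz)
  -- preseed: partition of Sstar into c-many pieces of size c
  obtain ⟨e2⟩ : Nonempty (Sstar ≃ (Cardinal.ord c).ToType × (Cardinal.ord c).ToType) := by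
    refine Cardinal.eq.mp ?_
    rw [hSc, Cardinal.mk_prod, Cardinal.mk_ord_toType, Cardinal.lift_id,
      Cardinal.mul_eq_self hc]
  let A0 : (Cardinal.ord c).ToType → Set (Cardinal.ord c).ToType := fun i => {z | ∃ h : z ∈ Sstar, (e2 ⟨z, h⟩).1 = i}
  have hA0S : ∀ i, A0 i ⊆ Sstar := by rintro i z ⟨h, -⟩; exact h
  have hA0card : ∀ i, #(A0 i) = c := by
    intro i
    refine le_antisymm ((Cardinal.mk_le_mk_of_subset (hA0S i)).trans_eq hSc) ?_
    have hinj : Function.Injective (fun j : (Cardinal.ord c).ToType =>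
        ((e2.symm (i, j) : Sstar) : (Cardinal.ord c).ToType)) := by
      intro j j' h
      have h2 : e2.symm (i, j) = e2.symm (i, j') := Subtype.ext h
      have h3 := e2.symm.injective h2
      exact congrArg Prod.snd h3
    calc c = #(Cardinal.ord c).ToType := (Cardinal.mk_ord_toType c).symm
      _ ≤ #(A0 i) := by
          refine Cardinal.mk_le_of_injective (f := fun j : (Cardinal.ord c).ToType =>
            (⟨(e2.symm (i, j) : Sstar), ?_⟩ : A0 i)) ?_
          · refine ⟨(e2.symm (i, j)).2, ?_⟩
            have : (⟨((e2.symm (i, j) : Sstar) : (Cardinal.ord c).ToType), (e2.symm (i, j)).2⟩ : Sstar)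
                = e2.symm (i, j) := Subtype.ext rfl
            rw [this, Equiv.apply_symm_apply]
          · intro j j' h
            have hval := congrArg (fun z : A0 i => (z : (Cardinal.ord c).ToType)) h
            exact hinj hval
  have hA0unb : ∀ i (b : (Cardinal.ord c).ToType), ∃ z ∈ A0 i, b < z :=
    fun i => unb_of_mk_eq c hc _ (hA0card i)
  have hA0disj : ∀ i j, i ≠ j → A0 i ∩ A0 j = ∅ := by
    intro i j hij
    ext z
    simp only [Set.mem_inter_iff, Set.mem_empty_iff_false, iff_false]
    rintro ⟨⟨h1, hz1⟩, ⟨h2, hz2⟩⟩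
    exact hij (hz1 ▸ hz2 ▸ rfl)
  have hA0inj : Function.Injective A0 := by
    intro i j h
    by_contra hij
    obtain ⟨z, hz, -⟩ := hA0unb i (Classical.arbitrary _)
    have : z ∈ A0 i ∩ A0 j := ⟨hz, h ▸ hz⟩
    rw [hA0disj i j hij] at this
    exact this
  -- Zorn
  let Z : Set (Set (Set (Cardinal.ord c).ToType)) := {𝒜 | Set.range A0 ⊆ 𝒜 ∧
    (∀ B ∈ 𝒜, B ⊆ Sstar ∧ ∀ b : (Cardinal.ord c).ToType, ∃ z ∈ B, b < z) ∧
    (∀ B ∈ 𝒜, ∀ B' ∈ 𝒜, B ≠ B' → ∃ b : (Cardinal.ord c).ToType, ∀ z ∈ B ∩ B', z ≤ b)}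
  have hZ0 : Set.range A0 ∈ Z := by
    refine ⟨subset_rfl, ?_, ?_⟩
    · rintro B ⟨i, rfl⟩
      exact ⟨hA0S i, hA0unb i⟩
    · rintro B ⟨i, rfl⟩ B' ⟨j, rfl⟩ hne
      have hij : i ≠ j := fun h => hne (h ▸ rfl)
      obtain ⟨b⟩ : Nonempty (Cardinal.ord c).ToType := ⟨Classical.arbitrary _⟩
      refine ⟨b, ?_⟩
      intro z hz
      rw [hA0disj i j hij] at hz
      exact absurd hz (Set.notMem_empty z)
  obtain ⟨𝒜, h𝒜0, h𝒜max⟩ := zorn_subset_nonempty Z (by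
    intro ch hch hchain hchne
    refine ⟨⋃₀ ch, ⟨?_, ?_, ?_⟩, fun s hs => Set.subset_sUnion_of_mem hs⟩
    · obtain ⟨𝒜₁, h𝒜₁⟩ := hchne
      exact (hch h𝒜₁).1.trans (Set.subset_sUnion_of_mem h𝒜₁)
    · rintro B ⟨𝒜₁, h𝒜₁, hB⟩
      exact (hch h𝒜₁).2.1 B hB
    · rintro B ⟨𝒜₁, h𝒜₁, hB⟩ B' ⟨𝒜₂, h𝒜₂, hB'⟩ hne
      rcases hchain.total h𝒜₁ h𝒜₂ with h | h
      · exact (hch h𝒜₂).2.2 B (h hB) B' hB' hne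
      · exact (hch h𝒜₁).2.2 B hB B' (h hB') hne) _ hZ0
  -- 𝒜 has more than c members
  have hbig : ¬ (#𝒜 ≤ c) := by
    intro hle
    have hge : c ≤ #𝒜 := by
      calc c = #(Cardinal.ord c).ToType := (Cardinal.mk_ord_toType c).symm
        _ ≤ #𝒜 := Cardinal.mk_le_of_injective (f := fun i => (⟨A0 i, h𝒜0 ⟨i, rfl⟩⟩ : 𝒜))
            (fun i j h => hA0inj (congrArg Subtype.val h))
    have hmk : #((Cardinal.ord c).ToType) = #𝒜 :=
      (Cardinal.mk_ord_toType c).trans (le_antisymm hge hle)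
    obtain ⟨Cf⟩ : Nonempty ((Cardinal.ord c).ToType ≃ 𝒜) := Cardinal.eq.mp hmk
    obtain ⟨Astar, hAS, hAunb, hAbdd⟩ := adExtend c hc reg Sstar (fun i => (Cf i : Set (Cardinal.ord c).ToType))
      (fun i => (h𝒜max.1.2.1 _ (Cf i).2).1)
      (fun i => (h𝒜max.1.2.1 _ (Cf i).2).2)
      (fun i j hij => h𝒜max.1.2.2 _ (Cf i).2 _ (Cf j).2
        (fun h => hij (Cf.injective (Subtype.ext h))))
    have hAnotin : Astar ∉ 𝒜 := by
      intro hmem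
      obtain ⟨i0, hi0⟩ : ∃ i0, (Cf i0 : Set (Cardinal.ord c).ToType) = Astar := by
        obtain ⟨i0, hi0⟩ := Cf.surjective ⟨Astar, hmem⟩
        exact ⟨i0, congrArg Subtype.val hi0⟩
      obtain ⟨b, hb⟩ := hAbdd i0
      obtain ⟨z, hz, hbz⟩ := hAunb b
      exact absurd (hb z ⟨hz, hi0.symm ▸ hz⟩) (not_le.mpr hbz)
    have hins : insert Astar 𝒜 ∈ Z := by
      refine ⟨h𝒜max.1.1.trans (Set.subset_insert _ _), ?_, ?_⟩
      · rintro B hB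
        rcases Set.mem_insert_iff.mp hB with rfl | hB
        · exact ⟨hAS, hAunb⟩
        · exact h𝒜max.1.2.1 B hB
      · rintro B hB B' hB' hne
        rcases Set.mem_insert_iff.mp hB with hBA | hBmem
        · rcases Set.mem_insert_iff.mp hB' with hB'A | hB'mem
          · exact absurd (hBA.trans hB'A.symm) hne
          · obtain ⟨i, hi⟩ := Cf.surjective ⟨B', hB'mem⟩
            obtain ⟨b, hb⟩ := hAbdd i
            refine ⟨b, fun z hz => hb z ⟨hBA ▸ hz.1, ?_⟩⟩
            rw [congrArg Subtype.val hi]; exact hz.2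
        · rcases Set.mem_insert_iff.mp hB' with hB'A | hB'mem
          · obtain ⟨i, hi⟩ := Cf.surjective ⟨B, hBmem⟩
            obtain ⟨b, hb⟩ := hAbdd i
            refine ⟨b, fun z hz => hb z ⟨hB'A ▸ hz.2, ?_⟩⟩
            rw [congrArg Subtype.val hi]; exact hz.1
          · exact h𝒜max.1.2.2 B hBmem B' hB'mem hne
    have := h𝒜max.2 hins (Set.subset_insert _ _)
    exact hAnotin (this (Set.mem_insert _ _))
  -- extract a (succ c)-indexed subfamily
  have hsucc : #((Order.succ c).ord.ToType) ≤ #𝒜 := by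
    rw [Cardinal.mk_ord_toType]
    exact Order.succ_le_of_lt (not_le.mp hbig)
  obtain ⟨ι⟩ := Cardinal.le_def _ _ |>.mp hsucc
  refine ⟨fun γ => ((ι γ : 𝒜) : Set (Cardinal.ord c).ToType), ?_, ?_, ?_⟩
  · exact fun γ => (h𝒜max.1.2.1 _ (ι γ).2).1
  · exact fun γ => (h𝒜max.1.2.1 _ (ι γ).2).2
  · intro γ δ hγδ
    refine h𝒜max.1.2.2 _ (ι γ).2 _ (ι δ).2 ?_
    intro h
    exact hγδ (ι.injective (Subtype.ext h))


end HejdukAux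

open HejdukAux

/-- Hejduk: if in a category base `(X, S)` the σ-ideal of meager sets is
`α`-additive for every cardinal `α < #(X)` and has a base of cardinality at most `#(X)`,
and `X` itself is not meager, then every partition of `X` into meager sets admits a
subfamily whose union is not a Baire set. -/
theorem hejduk_non_baire_union {X : Type u}
    (S : Set (Set X)) (hCB : IsCategoryBase (Set.univ : Set X) S)
    (hadd : ∀ (ι : Type u) (f : ι → Set X), Cardinal.mk ι < Cardinal.mk X →
      (∀ i, MeagerIn S (f i)) → MeagerIn S (⋃ i, f i))
    (hbase : ∃ P : Set (Set X), (∀ p ∈ P, MeagerIn S p) ∧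
      (∀ M : Set X, MeagerIn S M → ∃ p ∈ P, M ⊆ p) ∧
      Cardinal.mk P ≤ Cardinal.mk X)
    (hX : ¬ MeagerIn S (Set.univ : Set X))
    (T : Type*) (Xt : T → Set X)
    (hdisj : Pairwise (Function.onFun Disjoint Xt))
    (hcover : (⋃ t, Xt t) = Set.univ)
    (hmeager : ∀ t, MeagerIn S (Xt t)) :
    ∃ T' : Set T, ¬ BaireSet Set.univ S (⋃ t ∈ T', Xt t) := by
  classical
  by_contra hcon
  push_neg at hcon
  obtain ⟨P, hP1, hP2, hP3⟩ := hbase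
  obtain ⟨x0, -⟩ := hCB.carrier_nonempty
  haveI hXne : Nonempty X := ⟨x0⟩
  set κ := Cardinal.mk X with hκdef
  -- ∅ is not a region
  have hne : ∅ ∉ S := by
    intro h0
    refine hX ⟨fun _ => Set.univ, fun n A hA => ⟨∅, h0, Set.empty_subset A, disjoint_bot_left⟩, ?_⟩
    rw [Set.iUnion_const]
  -- singletons are meager
  have hsingl : ∀ x : X, MeagerIn S {x} := by
    intro x
    have hx : x ∈ ⋃ t, Xt t := hcover ▸ Set.mem_univ x
    obtain ⟨t, ht⟩ := Set.mem_iUnion.mp hx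
    exact meager_mono (hmeager t) (Set.singleton_subset_iff.mpr ht)
  -- κ is infinite
  have hκinf : Cardinal.aleph0 ≤ κ := by
    by_contra h
    push_neg at h
    have hfin : Finite X := Cardinal.lt_aleph0_iff_finite.mp h
    haveI : Countable X := Finite.to_countable
    obtain ⟨g, hg⟩ := exists_surjective_nat X
    refine hX ?_
    have huniv : (Set.univ : Set X) ⊆ ⋃ n, ({g n} : Set X) := by
      intro z _
      obtain ⟨n, rfl⟩ := hg z
      exact Set.mem_iUnion.mpr ⟨n, rfl⟩
    exact meager_mono (meager_iUnion (fun n => hsingl (g n))) huniv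
  -- P is nonempty; absorbing enumeration of P
  have hPne : P.Nonempty := by
    obtain ⟨p, hp, -⟩ := hP2 ∅ meager_empty
    exact ⟨p, hp⟩
  haveI : Nonempty ↥P := hPne.to_subtype
  obtain ⟨j⟩ : Nonempty (↥P ↪ κ.ord.ToType) := by
    rw [← Cardinal.le_def, Cardinal.mk_ord_toType]
    exact hP3
  set qe : κ.ord.ToType → Set X := fun i => ((Function.invFun j i : ↥P) : Set X) with hqedef
  have hqeP : ∀ i, qe i ∈ P := fun i => (Function.invFun j i).2
  have hqeM : ∀ i, MeagerIn S (qe i) := fun i => hP1 _ (hqeP i)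
  have habs : ∀ M : Set X, MeagerIn S M → ∃ i, M ⊆ qe i := by
    intro M hM
    obtain ⟨p, hp, hMp⟩ := hP2 M hM
    obtain ⟨i, hi⟩ := Function.invFun_surjective j.injective ⟨p, hp⟩
    refine ⟨i, ?_⟩
    have : qe i = p := congrArg Subtype.val hi
    rw [this]
    exact hMp
  -- small unions of base sets are meager
  have hQb : ∀ b : κ.ord.ToType, MeagerIn S (⋃ ξ : Set.Iic b, qe ξ.1) := by
    intro b
    exact hadd _ (fun ξ : Set.Iic b => qe ξ.1) (mk_Iic_lt κ hκinf b) (fun ξ => hqeM ξ.1)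
  -- regularity
  have REG : ∀ (ι : Type u) (f : ι → κ.ord.ToType), Cardinal.mk ι < κ → ∃ b, ∀ i, f i ≤ b := by
    intro ι f hι
    by_contra hreg
    push_neg at hreg
    have huniv : (Set.univ : Set X) ⊆ ⋃ i, ⋃ ξ : Set.Iic (f i), qe ξ.1 := by
      intro x _
      obtain ⟨i0, hi0⟩ := habs {x} (hsingl x)
      obtain ⟨i, hi⟩ := hreg i0
      exact Set.mem_iUnion.mpr ⟨i, Set.mem_iUnion.mpr ⟨⟨i0, le_of_lt hi⟩, hi0 rfl⟩⟩
    exact hX (meager_mono (hadd ι _ hι (fun i => hQb (f i))) huniv)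
  -- at least two regions
  have hSne : S.Nonempty := by
    have hx0 : x0 ∈ ⋃₀ S := hCB.cover.symm ▸ Set.mem_univ x0
    obtain ⟨A, hA, -⟩ := hx0
    exact ⟨A, hA⟩
  have hS1 : 1 < Cardinal.mk S := by
    by_contra h1
    push_neg at h1
    have hsub : S.Subsingleton := Cardinal.mk_le_one_iff_set_subsingleton.mp h1
    obtain ⟨A0, hA0⟩ := hSne
    have hA0univ : A0 = Set.univ := by
      refine Set.eq_univ_of_univ_subset ?_
      rw [← hCB.cover]
      intro z hz
      obtain ⟨B, hB, hzB⟩ := hz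
      rwa [hsub hB hA0] at hzB
    have hXt : ∀ t, Xt t = ∅ := by
      intro t
      obtain ⟨f, hf, hfeq⟩ := hmeager t
      have hfe : ∀ n, f n = ∅ := by
        intro n
        obtain ⟨B, hB, hBsub, hBdisj⟩ := hf n A0 hA0
        have hBuniv : B = Set.univ := by rw [hsub hB hA0, hA0univ]
        rw [hBuniv] at hBdisj
        exact Set.univ_disjoint.mp hBdisj
      rw [hfeq]
      simp [hfe]
    have hempty : (⋃ t, Xt t) = ∅ := by simp [hXt]
    rw [hcover] at hempty
    exact (not_isEmpty_of_nonempty X) (Set.univ_eq_empty_iff.mp hempty)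
  -- a hereditarily abundant region
  have hWstar : ∃ Wst ∈ S, ∀ B ∈ S, B ⊆ Wst → ¬ MeagerIn S B := by
    by_contra hc
    push_neg at hc
    refine hX ?_
    have hres := SD hCB hne Set.univ {B | B ∈ S ∧ MeagerIn S B} (fun B hB => hB.1)
      (fun B _ => Set.subset_univ B)
      (fun A hA _ => by
        obtain ⟨B, hB, h1, h2⟩ := hc A hA
        exact ⟨B, ⟨hB, h2⟩, h1⟩)
      (fun A hA hno =>
        absurd ⟨A, hA, Set.subset_inter subset_rfl (Set.subset_univ A)⟩ hno)
      Set.univ (fun B hB => by rw [Set.univ_inter]; exact hB.2)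
    rwa [Set.univ_inter] at hres
  obtain ⟨Wst, hWstS, hWst⟩ := hWstar
  -- the localization lemma
  have Hlocal : ∀ U : Set X, BaireSet Set.univ S U → ¬ MeagerIn S (U ∩ Wst) →
      ∃ B ∈ S, B ⊆ Wst ∧ ∃ i, B \ qe i ⊆ U := by
    intro U hU hpos
    by_contra hcl
    push_neg at hcl
    refine hpos ?_
    refine SD hCB hne Wst {B | B ∈ S ∧ B ⊆ Wst ∧ MeagerIn S (U ∩ B)}
      (fun B hB => hB.1) (fun B hB => hB.2.1) ?_ ?_ U (fun B hB => hB.2.2)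
    · intro A hA hAW
      obtain ⟨B, hBS, hBsub, hBor⟩ := hU A hA
      rcases hBor with h | h
      · exact ⟨B, ⟨hBS, hBsub.trans hAW, h⟩, hBsub⟩
      · obtain ⟨i, hi⟩ := habs _ h
        exfalso
        refine hcl B hBS (hBsub.trans hAW) i ?_
        intro z hz
        by_contra hzU
        exact hz.2 (hi ⟨⟨Set.mem_univ z, hzU⟩, hz.1⟩)
    · intro A hA hno
      obtain ⟨B, hBS, hBsub, hBdisj⟩ := hCB.avoid A hA {Wst}
        (Set.singleton_subset_iff.mpr hWstS) ⟨Wst, rfl⟩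
        (Set.pairwise_singleton _ _)
        (by rw [Cardinal.mk_singleton]; exact hS1)
        (by rwa [Set.sUnion_singleton])
      exact ⟨B, hBS, hBsub, hBdisj Wst rfl⟩
  -- the rank function
  have hXtW : ∀ t, ∃ i, Xt t ∩ Wst ⊆ qe i := fun t =>
    habs _ (meager_mono (hmeager t) Set.inter_subset_left)
  have hwf : WellFounded (fun a b : κ.ord.ToType => a < b) := IsWellFounded.wf
  set rs : T → κ.ord.ToType := fun t =>
    hwf.min {i | Xt t ∩ Wst ⊆ qe i} ⟨(hXtW t).choose, (hXtW t).choose_spec⟩ with hrsdef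
  have hrs1 : ∀ t, Xt t ∩ Wst ⊆ qe (rs t) := by
    intro t
    show rs t ∈ {i | Xt t ∩ Wst ⊆ qe i}
    rw [hrsdef]
    exact hwf.min_mem _ _
  have hrs2 : ∀ t i, Xt t ∩ Wst ⊆ qe i → rs t ≤ i := by
    intro t i hi
    have hnl := hwf.not_lt_min {i | Xt t ∩ Wst ⊆ qe i}
      hi
    rw [hrsdef]
    exact not_lt.mp hnl
  -- the range of the rank function is unbounded
  set Sstar : Set κ.ord.ToType := Set.range rs with hSstardef
  have hSunb : ∀ b, ∃ z ∈ Sstar, b < z := by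
    intro b
    by_contra hb
    push_neg at hb
    refine hWst Wst hWstS subset_rfl ?_
    have hsub : Wst ⊆ ⋃ ξ : Set.Iic b, qe ξ.1 := by
      intro z hz
      have hzU : z ∈ ⋃ t, Xt t := hcover ▸ Set.mem_univ z
      obtain ⟨t, ht⟩ := Set.mem_iUnion.mp hzU
      exact Set.mem_iUnion.mpr ⟨⟨rs t, hb _ ⟨t, rfl⟩⟩, hrs1 t ⟨ht, hz⟩⟩
    exact meager_mono (hQb b) hsub
  -- the almost disjoint family
  obtain ⟨Af, hAfS, hAfunb, hAfbdd⟩ := adFamily κ hκinf REG Sstar hSunb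
  set Γ : (Order.succ κ).ord.ToType → Set T := fun γ => {t | rs t ∈ Af γ} with hΓdef
  set Uu : (Order.succ κ).ord.ToType → Set X := fun γ => ⋃ t ∈ Γ γ, Xt t with hUudef
  have hUB : ∀ γ, BaireSet Set.univ S (Uu γ) := fun γ => hcon (Γ γ)
  have hUpos : ∀ γ, ¬ MeagerIn S (Uu γ ∩ Wst) := by
    intro γ hM
    obtain ⟨i, hi⟩ := habs _ hM
    obtain ⟨ξ, hξA, hξi⟩ := hAfunb γ i
    obtain ⟨t, ht⟩ := hAfS γ hξA
    have htΓ : t ∈ Γ γ := by rw [hΓdef]; exact Set.mem_setOf_eq ▸ (ht ▸ hξA)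
    have hsub : Xt t ∩ Wst ⊆ qe i := by
      intro z hz
      exact hi ⟨Set.mem_biUnion htΓ hz.1, hz.2⟩
    have hle := hrs2 t i hsub
    rw [ht] at hle
    exact absurd hle (not_le.mpr hξi)
  have hwit : ∀ γ, ∃ B ∈ S, B ⊆ Wst ∧ ∃ i, B \ qe i ⊆ Uu γ :=
    fun γ => Hlocal (Uu γ) (hUB γ) (hUpos γ)
  choose Bg hBgS hBgW zg hzg using hwit
  -- two witness regions have no common subregion
  have INC : ∀ γ δ, γ ≠ δ → ∀ E ∈ S, E ⊆ Bg γ ∩ Bg δ → False := by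
    intro γ δ hγδ E hES hEsub
    obtain ⟨b, hb⟩ := hAfbdd γ δ hγδ
    have hEW : E ⊆ Wst := fun z hz => hBgW γ (hEsub hz).1
    have hEm : E ⊆ qe (zg γ) ∪ (qe (zg δ) ∪ ⋃ ξ : Set.Iic b, qe ξ.1) := by
      intro z hz
      by_cases h1 : z ∈ qe (zg γ)
      · exact Or.inl h1
      by_cases h2 : z ∈ qe (zg δ)
      · exact Or.inr (Or.inl h2)
      have hzγ : z ∈ Uu γ := hzg γ ⟨(hEsub hz).1, h1⟩
      have hzδ : z ∈ Uu δ := hzg δ ⟨(hEsub hz).2, h2⟩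
      rw [hUudef] at hzγ hzδ
      obtain ⟨t, htΓ, htz⟩ := Set.mem_iUnion₂.mp hzγ
      obtain ⟨s, hsΓ, hsz⟩ := Set.mem_iUnion₂.mp hzδ
      have hts : t = s := by
        by_contra hts
        exact Set.disjoint_left.mp (hdisj hts) htz hsz
      subst hts
      have hmem : rs t ∈ Af γ ∩ Af δ := ⟨htΓ, hsΓ⟩
      have hzq : z ∈ qe (rs t) := hrs1 t ⟨htz, hEW hz⟩
      exact Or.inr (Or.inr (Set.mem_iUnion.mpr ⟨⟨rs t, hb _ hmem⟩, hzq⟩))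
    refine hWst E hES hEW ?_
    exact meager_mono (meager_union (hqeM _) (meager_union (hqeM _) (hQb b))) hEm
  -- endgame
  by_cases hCκ : Cardinal.mk S ≤ κ
  · -- pigeonhole: two equal witness regions
    have hninj : ¬ Function.Injective (fun γ => (⟨Bg γ, hBgS γ⟩ : S)) := by
      intro hinj
      have hle := Cardinal.mk_le_of_injective hinj
      rw [Cardinal.mk_ord_toType] at hle
      exact absurd (hle.trans hCκ) (not_le.mpr (Order.lt_succ κ))
    rw [Function.not_injective_iff] at hninj
    obtain ⟨γ, δ, hBeq, hγδ⟩ := hninj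
    have hval : Bg γ = Bg δ := congrArg Subtype.val hBeq
    exact INC γ δ hγδ (Bg γ) (hBgS γ)
      (Set.subset_inter subset_rfl (hval ▸ subset_rfl))
  · push_neg at hCκ
    -- disjointification gives succ κ many disjoint nonempty sets
    have key2 : ∀ (γ : (Order.succ κ).ord.ToType)
        (prev : ∀ δ, δ < γ → Set X),
        ((∀ δ (h : δ < γ), prev δ h ∈ S ∧ prev δ h ⊆ Bg δ) ∧
         (∀ δ δ' (h : δ < γ) (h' : δ' < γ), δ ≠ δ' → Disjoint (prev δ h) (prev δ' h'))) →
        ∃ B, B ∈ S ∧ B ⊆ Bg γ ∧ ∀ δ (h : δ < γ), Disjoint B (prev δ h) := by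
      intro γ prev hΞ
      obtain ⟨hΞ1, hΞ2⟩ := hΞ
      set ps : Set (Set X) := {B | ∃ δ, ∃ h : δ < γ, prev δ h = B} with hpsdef
      have hpsS : ps ⊆ S := by
        rintro B ⟨δ, h, rfl⟩
        exact (hΞ1 δ h).1
      have hpsPair : ps.Pairwise Disjoint := by
        rintro B ⟨δ, h, rfl⟩ B' ⟨δ', h', rfl⟩ hBB'
        have hδδ' : δ ≠ δ' := by rintro rfl; exact hBB' rfl
        exact hΞ2 δ δ' h h' hδδ'
      have hpslt : Cardinal.mk ps < Cardinal.mk S := by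
        have hsub : ps ⊆ Set.range (fun y : Set.Iio γ => prev y.1 y.2) := by
          rintro B ⟨δ, h, rfl⟩
          exact ⟨⟨δ, h⟩, rfl⟩
        refine lt_of_le_of_lt ((Cardinal.mk_le_mk_of_subset hsub).trans
          Cardinal.mk_range_le) (lt_of_le_of_lt ?_ hCκ)
        exact Order.lt_succ_iff.mp (Cardinal.mk_Iio_ord_toType γ)
      by_cases hps : ps.Nonempty
      · have hno : ¬ ∃ E ∈ S, E ⊆ Bg γ ∩ ⋃₀ ps := by
          rintro ⟨E, hES, hE⟩
          obtain ⟨F', hF'ps, E', hE'S, hE'⟩ :=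
            hCB.meet (Bg γ) (hBgS γ) ps hpsS hps hpsPair hpslt ⟨E, hES, hE⟩
          obtain ⟨δ, h, rfl⟩ := hF'ps
          have hδγ : γ ≠ δ := fun hc => absurd h (hc ▸ lt_irrefl γ)
          exact INC γ δ hδγ E' hE'S
            (fun z hz => ⟨(hE' hz).1, (hΞ1 δ h).2 (hE' hz).2⟩)
        obtain ⟨B, hBS, hBsub, hBdisj⟩ :=
          hCB.avoid (Bg γ) (hBgS γ) ps hpsS hps hpsPair hpslt hno
        exact ⟨B, hBS, hBsub, fun δ h => hBdisj _ ⟨δ, h, rfl⟩⟩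
      · refine ⟨Bg γ, hBgS γ, subset_rfl, ?_⟩
        intro δ h
        exact absurd (⟨prev δ h, δ, h, rfl⟩ : ps.Nonempty) hps
    let F2 : (Order.succ κ).ord.ToType → Set X :=
      IsWellFounded.fix (fun (a b : (Order.succ κ).ord.ToType) => a < b)
        (fun γ prev => if h : _ then (key2 γ prev h).choose else ∅)
    have hF2 : ∀ γ, F2 γ =
        if h : ((∀ δ (h : δ < γ), F2 δ ∈ S ∧ F2 δ ⊆ Bg δ) ∧
          (∀ δ δ' (h : δ < γ) (h' : δ' < γ), δ ≠ δ' → Disjoint (F2 δ) (F2 δ')))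
        then (key2 γ (fun δ _ => F2 δ) h).choose else ∅ :=
      fun γ => IsWellFounded.fix_eq _ _ γ
    have INV2 : ∀ γ, F2 γ ∈ S ∧ F2 γ ⊆ Bg γ ∧ ∀ δ, δ < γ → Disjoint (F2 δ) (F2 γ) := by
      intro γ
      refine IsWellFounded.induction (fun (a b : (Order.succ κ).ord.ToType) => a < b)
        (motive := fun γ => F2 γ ∈ S ∧ F2 γ ⊆ Bg γ ∧ ∀ δ, δ < γ → Disjoint (F2 δ) (F2 γ)) γ ?_
      intro x IH
      have hΞ : ((∀ δ (h : δ < x), F2 δ ∈ S ∧ F2 δ ⊆ Bg δ) ∧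
          (∀ δ δ' (h : δ < x) (h' : δ' < x), δ ≠ δ' → Disjoint (F2 δ) (F2 δ'))) := by
        constructor
        · intro δ h
          exact ⟨(IH δ h).1, (IH δ h).2.1⟩
        · intro δ δ' h h' hδδ'
          rcases lt_trichotomy δ δ' with hlt | heq | hgt
          · exact ((IH δ' h').2.2 δ hlt)
          · exact absurd heq hδδ'
          · exact ((IH δ h).2.2 δ' hgt).symm
      rw [hF2 x, dif_pos hΞ]
      obtain ⟨h1, h2, h3⟩ := (key2 x (fun δ _ => F2 δ) hΞ).choose_spec
      exact ⟨h1, h2, fun δ h => (h3 δ h).symm⟩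
    have hF2ne : ∀ γ, (F2 γ).Nonempty := fun γ =>
      Set.nonempty_iff_ne_empty.mpr (fun h => hne (h ▸ (INV2 γ).1))
    choose pt hpt using hF2ne
    have hptinj : Function.Injective pt := by
      intro γ δ h
      by_contra hγδ
      rcases lt_or_gt_of_ne hγδ with h' | h'
      · exact Set.disjoint_left.mp ((INV2 δ).2.2 γ h') (hpt γ) (h ▸ hpt δ)
      · exact Set.disjoint_left.mp ((INV2 γ).2.2 δ h') (hpt δ) (h ▸ hpt γ)
    have hle := Cardinal.mk_le_of_injective hptinj
    rw [Cardinal.mk_ord_toType] at hle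
    exact absurd hle (not_le.mpr (Order.lt_succ κ))
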